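/- Let a ∈ ℝ and b, c > 0, and define K on the open set U = {(x, y) ∈ ℝ² : |y| < x} by K(x, y) = a + (2bx + c)/(x² − y²). Then at every point of U, −∂K/∂x > |∂K/∂y|; explicitly, ∂K/∂x = −2(b(x² + y²) + cx)/(x² − y²)² and ∂K/∂y = 2y(2bx + c)/(x² − y²)². -/

import Mathlib

/-- Partial derivative with respect to the first variable. -/
noncomputable def pdx (f : ℝ × ℝ → ℝ) (p : ℝ × ℝ) : ℝ := fderiv ℝ f p (1, 0)

/-- Partial derivative with respect to the second variable. -/
noncomputable def pdy (f : ℝ × ℝ → ℝ) (p : ℝ × ℝ) : ℝ := fderiv ℝ f p (0, 1)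

set_option maxHeartbeats 1600000 in
/-- Parabolicity of the linear Weingarten (Bloore) flow
`K = a + (2bx + c)/(x² − y²)` on `U = {(x,y) : |y| < x}`, with the explicit
partial derivatives. -/
theorem linear_weingarten_parabolic (a b c : ℝ) (hb : 0 < b) (hc : 0 < c)
    (K : ℝ × ℝ → ℝ)
    (hK : K = fun q : ℝ × ℝ => a + (2 * b * q.1 + c) / (q.1 ^ 2 - q.2 ^ 2)) :
    ∀ p : ℝ × ℝ, |p.2| < p.1 →
      pdx K p = -(2 * (b * (p.1 ^ 2 + p.2 ^ 2) + c * p.1) / (p.1 ^ 2 - p.2 ^ 2) ^ 2) ∧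
      pdy K p = 2 * p.2 * (2 * b * p.1 + c) / (p.1 ^ 2 - p.2 ^ 2) ^ 2 ∧
      |pdy K p| < -pdx K p := by
  rintro ⟨x, y⟩ hp
  simp only at hp ⊢
  have hx : 0 < x := lt_of_le_of_lt (abs_nonneg y) hp
  have hy2 : y ^ 2 < x ^ 2 := by nlinarith [sq_abs y, abs_nonneg y]
  have hDne : x ^ 2 - y ^ 2 ≠ 0 := by nlinarith
  have hDpos : (0:ℝ) < (x ^ 2 - y ^ 2) ^ 2 := by positivity
  have hN : HasFDerivAt (fun q : ℝ × ℝ => 2 * b * q.1 + c)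
      ((2 * b) • ContinuousLinearMap.fst ℝ ℝ ℝ) (x, y) := by
    simpa using ((hasFDerivAt_fst (p := ((x, y) : ℝ × ℝ))).const_mul (2 * b)).add_const c
  have hD : HasFDerivAt (fun q : ℝ × ℝ => q.1 ^ 2 - q.2 ^ 2)
      ((x • ContinuousLinearMap.fst ℝ ℝ ℝ + x • ContinuousLinearMap.fst ℝ ℝ ℝ) -
       (y • ContinuousLinearMap.snd ℝ ℝ ℝ + y • ContinuousLinearMap.snd ℝ ℝ ℝ)) (x, y) := by
    simp only [pow_two]
    exact ((hasFDerivAt_fst (𝕜 := ℝ) (p := ((x, y) : ℝ × ℝ))).fun_mul (hasFDerivAt_fst (𝕜 := ℝ))).sub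
      ((hasFDerivAt_snd (𝕜 := ℝ) (p := ((x, y) : ℝ × ℝ))).fun_mul (hasFDerivAt_snd (𝕜 := ℝ)))
  have hinv : HasFDerivAt (fun q : ℝ × ℝ => (q.1 ^ 2 - q.2 ^ 2)⁻¹)
      ((-ContinuousLinearMap.mulLeftRight ℝ ℝ (x ^ 2 - y ^ 2)⁻¹ (x ^ 2 - y ^ 2)⁻¹).comp
        ((x • ContinuousLinearMap.fst ℝ ℝ ℝ + x • ContinuousLinearMap.fst ℝ ℝ ℝ) -
         (y • ContinuousLinearMap.snd ℝ ℝ ℝ + y • ContinuousLinearMap.snd ℝ ℝ ℝ))) (x, y) :=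
    (hasFDerivAt_inv' (𝕜 := ℝ) hDne).comp (x, y) hD
  have hKd : HasFDerivAt K
      ((2 * b * x + c) •
        ((-ContinuousLinearMap.mulLeftRight ℝ ℝ (x ^ 2 - y ^ 2)⁻¹ (x ^ 2 - y ^ 2)⁻¹).comp
          ((x • ContinuousLinearMap.fst ℝ ℝ ℝ + x • ContinuousLinearMap.fst ℝ ℝ ℝ) -
           (y • ContinuousLinearMap.snd ℝ ℝ ℝ + y • ContinuousLinearMap.snd ℝ ℝ ℝ))) +
       (x ^ 2 - y ^ 2)⁻¹ • ((2 * b) • ContinuousLinearMap.fst ℝ ℝ ℝ)) (x, y) := by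
    rw [hK]
    simp only [div_eq_mul_inv]
    exact (hN.mul hinv).const_add a
  have hf := hKd.fderiv
  have hpdx : pdx K (x, y) =
      -(2 * (b * (x ^ 2 + y ^ 2) + c * x) / (x ^ 2 - y ^ 2) ^ 2) := by
    rw [pdx, hf]
    simp [ContinuousLinearMap.mulLeftRight_apply]
    field_simp
    ring
  have hpdy : pdy K (x, y) = 2 * y * (2 * b * x + c) / (x ^ 2 - y ^ 2) ^ 2 := by
    rw [pdy, hf]
    simp [ContinuousLinearMap.mulLeftRight_apply]
    field_simp
    ring
  refine ⟨hpdx, hpdy, ?_⟩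
  rw [hpdx, hpdy, abs_div, abs_of_pos hDpos, neg_neg, div_lt_div_iff₀ hDpos hDpos]
  have h1 : |2 * y * (2 * b * x + c)| = 2 * |y| * (2 * b * x + c) := by
    rw [abs_mul, abs_of_pos (by nlinarith : (0:ℝ) < 2 * b * x + c), abs_mul, abs_two]
  rw [h1]
  have hkey : 2 * |y| * (2 * b * x + c) < 2 * (b * (x ^ 2 + y ^ 2) + c * x) := by
    nlinarith [mul_nonneg hb.le (sq_nonneg (x - |y|)), mul_pos hc (sub_pos.mpr hp), sq_abs y]
  exact mul_lt_mul_of_pos_right hkey hDpos
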